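/- Let λ > 0 and let (S₀, 0, P₀) be a point of the family Σ, i.e. S₀² + P₀²/2 = 1/3. Then the characteristic polynomial of the 3×3 Jacobian matrix of the reduced vector field F at (S₀, 0, P₀) is X·(X − (1 − (λ/2)P₀))·(X − (2/3)(2 + √3 S₀)); i.e., the linearization has eigenvalues ε₁ = 0, ε₂ = 1 − (λ/2)P₀, and ε₃ = (2/3)(2 + √3 S₀). -/

import Mathlib

/-- The reduced vector field `F : ℝ³ → ℝ³` in the variables `(S, U, P)`. -/
noncomputable def Fvec (lam : ℝ) (x : Fin 3 → ℝ) : Fin 3 → ℝ :=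
  ![-1 / (3 * Real.sqrt 3) - (2 / 3) * x 0 + x 0 ^ 2 / Real.sqrt 3
      + x 1 ^ 2 / Real.sqrt 3 + x 2 ^ 2 / (2 * Real.sqrt 3)
      + 2 * x 0 ^ 3 - x 0 * x 1 ^ 2 + x 0 * x 2 ^ 2,
    x 1 * (1 / 3 - (lam / 2) * x 2 + 2 * x 0 ^ 2 - x 1 ^ 2 + x 2 ^ 2),
    -(2 / 3) * x 2 + lam * x 1 ^ 2 + 2 * x 0 ^ 2 * x 2 - x 1 ^ 2 * x 2
      + x 2 ^ 3]

/-- The Jacobian matrix of `F` at `x`: entry `(i, j)` is the partial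
derivative of the `i`-th component with respect to the `j`-th variable. -/
noncomputable def jac (lam : ℝ) (x : Fin 3 → ℝ) : Matrix (Fin 3) (Fin 3) ℝ :=
  Matrix.of fun i j => deriv (fun s => Fvec lam (Function.update x j s) i) (x j)


lemma deriv_cubic (f : ℝ → ℝ) (a b c d t r : ℝ)
    (hf : ∀ s, f s = a + b*s + c*s^2 + d*s^3)
    (hr : b + 2*c*t + 3*d*t^2 = r) :
    deriv f t = r := by
  have h : HasDerivAt (fun s : ℝ => a + b*s + c*s^2 + d*s^3)
      (b + 2*c*t + 3*d*t^2) t := by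
    have h1 := (hasDerivAt_id t).const_mul b
    have h2 := (hasDerivAt_pow 2 t).const_mul c
    have h3 := (hasDerivAt_pow 3 t).const_mul d
    have h0 := (((hasDerivAt_const t a).add h1).add h2).add h3
    refine h0.congr_deriv ?_
    push_cast; ring
  rw [funext hf, h.deriv, hr]

lemma jac_eq (lam : ℝ) (S₀ P₀ : ℝ) :
    jac lam ![S₀, 0, P₀] =
      !![-2/3 + P₀^2 + 2*S₀/Real.sqrt 3 + 6*S₀^2, 0, P₀/Real.sqrt 3 + 2*S₀*P₀;
         0, 1/3 - lam/2*P₀ + 2*S₀^2 + P₀^2, 0;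
         4*S₀*P₀, 0, -2/3 + 2*S₀^2 + 3*P₀^2] := by
  have simp_rule : ∀ (i j : Fin 3), jac lam ![S₀, 0, P₀] i j
      = deriv (fun s => Fvec lam (Function.update ![S₀, 0, P₀] j s) i)
          (![S₀, 0, P₀] j) := fun i j => rfl
  rw [Matrix.eta_fin_three (jac lam ![S₀, 0, P₀])]
  rw [simp_rule 0 0, simp_rule 0 1, simp_rule 0 2, simp_rule 1 0, simp_rule 1 1,
    simp_rule 1 2, simp_rule 2 0, simp_rule 2 1, simp_rule 2 2]
  simp only [Fvec, Matrix.cons_val_zero, Matrix.cons_val_one, Matrix.head_cons,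
    Matrix.cons_val_two, Matrix.tail_cons,
    Function.update_self,
    Function.update_of_ne (show (1:Fin 3) ≠ 0 by decide),
    Function.update_of_ne (show (2:Fin 3) ≠ 0 by decide),
    Function.update_of_ne (show (0:Fin 3) ≠ 1 by decide),
    Function.update_of_ne (show (2:Fin 3) ≠ 1 by decide),
    Function.update_of_ne (show (0:Fin 3) ≠ 2 by decide),
    Function.update_of_ne (show (1:Fin 3) ≠ 2 by decide)]
  rw [deriv_cubic (fun s =>
        -1 / (3 * Real.sqrt 3) - 2 / 3 * s + s ^ 2 / Real.sqrt 3 + 0 ^ 2 / Real.sqrt 3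
          + P₀ ^ 2 / (2 * Real.sqrt 3) + 2 * s ^ 3 - s * 0 ^ 2 + s * P₀ ^ 2)
      (-1 / (3 * Real.sqrt 3) + P₀ ^ 2 / (2 * Real.sqrt 3)) (-2/3 + P₀^2)
      (1 / Real.sqrt 3) 2 S₀ (-2/3 + P₀^2 + 2*S₀/Real.sqrt 3 + 6*S₀^2) (fun s => by ring) (by ring),
    deriv_cubic (fun s =>
        -1 / (3 * Real.sqrt 3) - 2 / 3 * S₀ + S₀ ^ 2 / Real.sqrt 3 + s ^ 2 / Real.sqrt 3
          + P₀ ^ 2 / (2 * Real.sqrt 3) + 2 * S₀ ^ 3 - S₀ * s ^ 2 + S₀ * P₀ ^ 2)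
      (-1 / (3 * Real.sqrt 3) - 2 / 3 * S₀ + S₀ ^ 2 / Real.sqrt 3
        + P₀ ^ 2 / (2 * Real.sqrt 3) + 2 * S₀ ^ 3 + S₀ * P₀ ^ 2) 0
      (1 / Real.sqrt 3 - S₀) 0 0 0 (fun s => by ring) (by ring),
    deriv_cubic (fun s =>
        -1 / (3 * Real.sqrt 3) - 2 / 3 * S₀ + S₀ ^ 2 / Real.sqrt 3 + 0 ^ 2 / Real.sqrt 3
          + s ^ 2 / (2 * Real.sqrt 3) + 2 * S₀ ^ 3 - S₀ * 0 ^ 2 + S₀ * s ^ 2)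
      (-1 / (3 * Real.sqrt 3) - 2 / 3 * S₀ + S₀ ^ 2 / Real.sqrt 3 + 2 * S₀ ^ 3) 0
      (1 / (2 * Real.sqrt 3) + S₀) 0 P₀ (P₀/Real.sqrt 3 + 2*S₀*P₀) (fun s => by ring) (by ring),
    deriv_cubic (fun s => 0 * (1 / 3 - lam / 2 * P₀ + 2 * s ^ 2 - 0 ^ 2 + P₀ ^ 2))
      0 0 0 0 S₀ 0 (fun s => by ring) (by ring),
    deriv_cubic (fun s => s * (1 / 3 - lam / 2 * P₀ + 2 * S₀ ^ 2 - s ^ 2 + P₀ ^ 2))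
      0 (1 / 3 - lam / 2 * P₀ + 2 * S₀ ^ 2 + P₀ ^ 2) 0 (-1) 0 (1/3 - lam/2*P₀ + 2*S₀^2 + P₀^2) (fun s => by ring) (by ring),
    deriv_cubic (fun s => 0 * (1 / 3 - lam / 2 * s + 2 * S₀ ^ 2 - 0 ^ 2 + s ^ 2))
      0 0 0 0 P₀ 0 (fun s => by ring) (by ring),
    deriv_cubic (fun s => -(2 / 3) * P₀ + lam * 0 ^ 2 + 2 * s ^ 2 * P₀ - 0 ^ 2 * P₀ + P₀ ^ 3)
      (-(2 / 3) * P₀ + P₀ ^ 3) 0 (2 * P₀) 0 S₀ (4*S₀*P₀) (fun s => by ring) (by ring),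
    deriv_cubic (fun s => -(2 / 3) * P₀ + lam * s ^ 2 + 2 * S₀ ^ 2 * P₀ - s ^ 2 * P₀ + P₀ ^ 3)
      (-(2 / 3) * P₀ + 2 * S₀ ^ 2 * P₀ + P₀ ^ 3) 0 (lam - P₀) 0 0 0 (fun s => by ring) (by ring),
    deriv_cubic (fun s => -(2 / 3) * s + lam * 0 ^ 2 + 2 * S₀ ^ 2 * s - 0 ^ 2 * s + s ^ 3)
      0 (-2/3 + 2 * S₀ ^ 2) 0 1 P₀ (-2/3 + 2*S₀^2 + 3*P₀^2) (fun s => by ring) (by ring)]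

open Polynomial in
/-- For `λ > 0` and a point `(S₀, 0, P₀)` of the family `Σ`
(i.e. `S₀² + P₀²/2 = 1/3`), the characteristic polynomial of the Jacobian of
the reduced vector field there is
`X·(X − (1 − (λ/2)P₀))·(X − (2/3)(2 + √3 S₀))`; i.e. the linearization has
eigenvalues `ε₁ = 0`, `ε₂ = 1 − (λ/2)P₀` and `ε₃ = (2/3)(2 + √3 S₀)`. -/
theorem charpoly_on_Sigma (lam : ℝ) (hlam : 0 < lam) (S₀ P₀ : ℝ)
    (hSigma : S₀ ^ 2 + P₀ ^ 2 / 2 = 1 / 3) :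
    (jac lam ![S₀, 0, P₀]).charpoly
      = X * (X - C (1 - (lam / 2) * P₀))
          * (X - C ((2 / 3) * (2 + Real.sqrt 3 * S₀))) := by

  have h3 : Real.sqrt 3 ^ 2 = 3 := Real.sq_sqrt (by norm_num)
  have hs : Real.sqrt 3 ≠ 0 := by positivity
  have hdiv : ∀ y : ℝ, y / Real.sqrt 3 = y * Real.sqrt 3 / 3 := by
    intro y
    rw [div_eq_div_iff hs (by norm_num : (3:ℝ) ≠ 0)]
    linear_combination (-y) * h3
  have he : (1:ℝ)/3 - lam/2*P₀ + 2*S₀^2 + P₀^2 = 1 - (lam / 2) * P₀ := by nlinarith [hSigma]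
  have hsum : (-2/3 + P₀^2 + 2*S₀/Real.sqrt 3 + 6*S₀^2) + (-2/3 + 2*S₀^2 + 3*P₀^2)
      = (2 / 3) * (2 + Real.sqrt 3 * S₀) := by
    rw [hdiv]
    linear_combination 8*hSigma
  have hprod : (-2/3 + P₀^2 + 2*S₀/Real.sqrt 3 + 6*S₀^2) * (-2/3 + 2*S₀^2 + 3*P₀^2)
      = (P₀/Real.sqrt 3 + 2*S₀*P₀) * (4*S₀*P₀) := by
    rw [hdiv, hdiv]
    linear_combination (-4/3 + (4/3)*S₀*Real.sqrt 3 + 12*S₀^2 + 6*P₀^2)*hSigma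
  have hsum' := congrArg (C : ℝ →+* ℝ[X]) hsum
  have hprod' := congrArg (C : ℝ →+* ℝ[X]) hprod
  rw [map_add] at hsum'
  rw [map_mul, map_mul] at hprod'
  rw [jac_eq, Matrix.charpoly, he]
  have hcm : Matrix.charmatrix
      !![-2/3 + P₀^2 + 2*S₀/Real.sqrt 3 + 6*S₀^2, 0, P₀/Real.sqrt 3 + 2*S₀*P₀;
         0, 1 - (lam / 2) * P₀, 0;
         4*S₀*P₀, 0, -2/3 + 2*S₀^2 + 3*P₀^2]
      = !![X - C (-2/3 + P₀^2 + 2*S₀/Real.sqrt 3 + 6*S₀^2), 0, -C (P₀/Real.sqrt 3 + 2*S₀*P₀);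
           0, X - C (1 - (lam / 2) * P₀), 0;
           -C (4*S₀*P₀), 0, X - C (-2/3 + 2*S₀^2 + 3*P₀^2)] := by
    ext i j
    fin_cases i <;> fin_cases j <;>
      simp [Matrix.charmatrix_apply_eq, Matrix.charmatrix_apply_ne]
  rw [hcm, Matrix.det_fin_three]
  simp only [Matrix.of_apply, Matrix.cons_val', Matrix.cons_val_zero, Matrix.cons_val_one,
    Matrix.head_cons, Matrix.cons_val_two, Matrix.tail_cons, Matrix.empty_val',
    Matrix.cons_val_fin_one, Matrix.head_fin_const]
  linear_combination (X - C (1 - (lam / 2) * P₀)) * hprod'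
    - (X - C (1 - (lam / 2) * P₀)) * X * hsum'
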